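/- For any four random variables X₁, X₂, X₃, X₄ each taking values in {-1, 1}, the quantity X₁X₃ + X₂X₃ + X₂X₄ − X₁X₄ always equals ±2, and hence E[X₁X₃] + E[X₂X₃] + E[X₂X₄] − E[X₁X₄] ≤ 2 (CHSH/Bell inequality). -/
import Mathlib


open MeasureTheory

/-- CHSH/Bell inequality for classical random variables taking values ±1. -/
theorem chsh_bell_inequality
    {Ω : Type*} [MeasurableSpace Ω] (μ : Measure Ω) [IsProbabilityMeasure μ]
    (X₁ X₂ X₃ X₄ : Ω → ℝ)
    (hm₁ : Measurable X₁) (hm₂ : Measurable X₂)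
    (hm₃ : Measurable X₃) (hm₄ : Measurable X₄)
    (h₁ : ∀ ω, X₁ ω = -1 ∨ X₁ ω = 1) (h₂ : ∀ ω, X₂ ω = -1 ∨ X₂ ω = 1)
    (h₃ : ∀ ω, X₃ ω = -1 ∨ X₃ ω = 1) (h₄ : ∀ ω, X₄ ω = -1 ∨ X₄ ω = 1) :
    (∀ ω, X₁ ω * X₃ ω + X₂ ω * X₃ ω + X₂ ω * X₄ ω - X₁ ω * X₄ ω = 2 ∨
          X₁ ω * X₃ ω + X₂ ω * X₃ ω + X₂ ω * X₄ ω - X₁ ω * X₄ ω = -2) ∧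
    (∫ ω, X₁ ω * X₃ ω ∂μ) + (∫ ω, X₂ ω * X₃ ω ∂μ) + (∫ ω, X₂ ω * X₄ ω ∂μ)
      - (∫ ω, X₁ ω * X₄ ω ∂μ) ≤ 2 := by
  have key : ∀ ω, X₁ ω * X₃ ω + X₂ ω * X₃ ω + X₂ ω * X₄ ω - X₁ ω * X₄ ω = 2 ∨
      X₁ ω * X₃ ω + X₂ ω * X₃ ω + X₂ ω * X₄ ω - X₁ ω * X₄ ω = -2 := by
    intro ω
    rcases h₁ ω with e₁ | e₁ <;> rcases h₂ ω with e₂ | e₂ <;>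
      rcases h₃ ω with e₃ | e₃ <;> rcases h₄ ω with e₄ | e₄ <;>
      rw [e₁, e₂, e₃, e₄] <;> norm_num
  refine ⟨key, ?_⟩
  have hint : ∀ (f g : Ω → ℝ), Measurable f → Measurable g →
      (∀ ω, f ω = -1 ∨ f ω = 1) → (∀ ω, g ω = -1 ∨ g ω = 1) →
      Integrable (fun ω => f ω * g ω) μ := by
    intro f g hf hg hfv hgv
    apply Integrable.mono' (integrable_const (1 : ℝ)) ((hf.mul hg).aestronglyMeasurable)
    filter_upwards with ω
    rcases hfv ω with e | e <;> rcases hgv ω with e' | e' <;> simp [e, e']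
  have i13 := hint _ _ hm₁ hm₃ h₁ h₃
  have i23 := hint _ _ hm₂ hm₃ h₂ h₃
  have i24 := hint _ _ hm₂ hm₄ h₂ h₄
  have i14 := hint _ _ hm₁ hm₄ h₁ h₄
  have hsum : (∫ ω, X₁ ω * X₃ ω ∂μ) + (∫ ω, X₂ ω * X₃ ω ∂μ) + (∫ ω, X₂ ω * X₄ ω ∂μ)
      - (∫ ω, X₁ ω * X₄ ω ∂μ)
      = ∫ ω, (X₁ ω * X₃ ω + X₂ ω * X₃ ω + X₂ ω * X₄ ω - X₁ ω * X₄ ω) ∂μ := by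
    have a1 : Integrable (fun ω => X₁ ω * X₃ ω + X₂ ω * X₃ ω) μ := i13.add i23
    have a2 : Integrable (fun ω => X₁ ω * X₃ ω + X₂ ω * X₃ ω + X₂ ω * X₄ ω) μ := a1.add i24
    rw [integral_sub a2 i14, integral_add a1 i24, integral_add i13 i23]
  rw [hsum]
  calc (∫ ω, (X₁ ω * X₃ ω + X₂ ω * X₃ ω + X₂ ω * X₄ ω - X₁ ω * X₄ ω) ∂μ)
      ≤ ∫ (_ : Ω), (2 : ℝ) ∂μ := by
        have ai : Integrable (fun ω => X₁ ω * X₃ ω + X₂ ω * X₃ ω + X₂ ω * X₄ ω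
            - X₁ ω * X₄ ω) μ := ((i13.add i23).add i24).sub i14
        apply integral_mono ai (integrable_const 2)
        intro ω
        rcases key ω with e | e <;> simp only [e] <;> norm_num
    _ = 2 := by simp
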